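/- Let φ: (0,∞) → (0,∞) be twice continuously differentiable and satisfy φ''(z) ≥ c₇ z⁻² φ(z) for all z > 0 (c₇ > 0). Let ψ: (0,∞) → [0,∞) be nonnegative, nondecreasing, twice continuously differentiable, and satisfy ψ''(z) ≥ −c₉ z⁻¹ ψ'(z) − c₁₀ z⁻² ψ(z) with constants c₉ < 2 and c₁₀ < c₇. Then the product satisfies (ψφ)''(z) ≥ (c₇ − c₁₀) z⁻² ψ(z) φ(z) for all z > 0. (Key step: the auxiliary function κ(z) := 2zφ'(z) − c₉φ(z) is nonnegative since κ(0)=0 and κ'(z) = 2zφ''(z) + (2−c₉)φ'(z) ≥ 0, where φ' ≥ 0.) -/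

import Mathlib

open Real Set Filter

open Topology in
theorem stmt_16 (φ φ' φ'' ψ ψ' ψ'' : ℝ → ℝ) (c₇ c₉ c₁₀ : ℝ)
    (hc₇ : 0 < c₇) (hc₉ : c₉ < 2) (hc₁₀ : c₁₀ < c₇)
    (hφpos : ∀ z : ℝ, 0 < z → 0 < φ z)
    (hφd1 : ∀ z : ℝ, 0 < z → HasDerivAt φ (φ' z) z)
    (hφd2 : ∀ z : ℝ, 0 < z → HasDerivAt φ' (φ'' z) z)
    (hφ'nn : ∀ z : ℝ, 0 < z → 0 ≤ φ' z)
    -- κ(z) := 2zφ'(z) − c₉φ(z) tends to 0 as z → 0⁺ (κ(0) = 0)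
    (hκ0 : Filter.Tendsto (fun z => 2 * z * φ' z - c₉ * φ z)
      (nhdsWithin 0 (Set.Ioi 0)) (nhds 0))
    (hφsec : ∀ z : ℝ, 0 < z → c₇ * (φ z / z ^ 2) ≤ φ'' z)
    (hψnn : ∀ z : ℝ, 0 < z → 0 ≤ ψ z)
    (hψmono : MonotoneOn ψ (Set.Ioi (0:ℝ)))
    (hψd1 : ∀ z : ℝ, 0 < z → HasDerivAt ψ (ψ' z) z)
    (hψd2 : ∀ z : ℝ, 0 < z → HasDerivAt ψ' (ψ'' z) z)
    (hψsec : ∀ z : ℝ, 0 < z → -(c₉ * (ψ' z / z)) - c₁₀ * (ψ z / z ^ 2) ≤ ψ'' z) :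
    ∀ z : ℝ, 0 < z →
      (c₇ - c₁₀) * (ψ z * φ z / z ^ 2) ≤
        ψ'' z * φ z + 2 * ψ' z * φ' z + ψ z * φ'' z := by
  set κ : ℝ → ℝ := fun z => 2 * z * φ' z - c₉ * φ z with hκdef
  have hκmono : MonotoneOn κ (Set.Ioi (0:ℝ)) := by
    have hd : ∀ z ∈ Set.Ioi (0:ℝ), HasDerivAt κ (2 * φ' z + 2 * z * φ'' z - c₉ * φ' z) z := by
      intro z hz
      have h := (((hasDerivAt_id z).const_mul (2:ℝ)).mul (hφd2 z hz)).sub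
        ((hφd1 z hz).const_mul c₉)
      refine HasDerivAt.congr_deriv h ?_
      simp only [id_eq, mul_one]
    apply monotoneOn_of_deriv_nonneg (convex_Ioi 0)
    · exact fun z hz => (hd z hz).continuousAt.continuousWithinAt
    · intro z hz
      rw [interior_Ioi] at hz
      exact (hd z hz).differentiableAt.differentiableWithinAt
    · intro z hz
      rw [interior_Ioi] at hz
      rw [(hd z hz).deriv]
      have h3 := hφsec z hz
      have h4 : 0 < c₇ * (φ z / z ^ 2) :=
        mul_pos hc₇ (div_pos (hφpos z hz) (pow_pos hz 2))
      have h5 := hφ'nn z hz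
      nlinarith [mul_pos hz (h4.trans_le h3)]
  have hκnn : ∀ z : ℝ, 0 < z → 0 ≤ κ z := by
    intro z hz
    refine le_of_tendsto hκ0 ?_
    filter_upwards [Ioo_mem_nhdsGT_of_mem (by simp [hz] : (0:ℝ) ∈ Set.Ico 0 z)] with w hw
    exact hκmono hw.1 hz (le_of_lt hw.2)
  have hψ'nn : ∀ z : ℝ, 0 < z → 0 ≤ ψ' z := by
    intro z hz
    have hslope : Tendsto (slope ψ z) (𝓝[>] z) (𝓝 (ψ' z)) :=
      (hasDerivAt_iff_tendsto_slope.mp (hψd1 z hz)).mono_left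
        (nhdsWithin_mono _ fun y hy => ne_of_gt hy)
    refine ge_of_tendsto hslope ?_
    filter_upwards [self_mem_nhdsWithin] with y hy
    have h := hψmono hz (hz.trans hy) (le_of_lt hy)
    have hyz : 0 < y - z := sub_pos.mpr hy
    rw [slope_def_field]
    have : 0 ≤ ψ y - ψ z := sub_nonneg.mpr h
    positivity
  intro z hz
  have hz2 := pow_pos hz 2
  have h1 := hψsec z hz
  have h2 := hφsec z hz
  have hφz := hφpos z hz
  have hψz := hψnn z hz
  have hψ' := hψ'nn z hz
  have hκz := hκnn z hz
  simp only [hκdef] at hκz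
  have h1' : -(c₉ * ψ' z) * z - c₁₀ * ψ z ≤ ψ'' z * z ^ 2 := by
    have := mul_le_mul_of_nonneg_right h1 hz2.le
    calc -(c₉ * ψ' z) * z - c₁₀ * ψ z
        = (-(c₉ * (ψ' z / z)) - c₁₀ * (ψ z / z ^ 2)) * z ^ 2 := by field_simp
      _ ≤ ψ'' z * z ^ 2 := this
  have h2' : c₇ * φ z ≤ φ'' z * z ^ 2 := by
    have := mul_le_mul_of_nonneg_right h2 hz2.le
    calc c₇ * φ z = c₇ * (φ z / z ^ 2) * z ^ 2 := by field_simp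
      _ ≤ φ'' z * z ^ 2 := this
  rw [show (c₇ - c₁₀) * (ψ z * φ z / z ^ 2) = (c₇ - c₁₀) * (ψ z * φ z) / z ^ 2 from by ring,
    div_le_iff₀ hz2]
  nlinarith [mul_le_mul_of_nonneg_right h1' hφz.le, mul_le_mul_of_nonneg_right h2' hψz,
    mul_nonneg (mul_nonneg hψ' hκz) hz.le]
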